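/- Let l ≥ 1 be an integer, M > 0, h > 0, and let F^0 and F^1 be spike-train signals, each with l nodes contained in the interval [−h, h] and with all amplitudes bounded in absolute value by 2M. Suppose their moments agree up to order 2l − 2: m_k(F^0) = m_k(F^1) for k = 0, 1, ..., 2l − 2. Then for every real s with |s| ≤ 1/(2πh), the Fourier transforms satisfy |𝓕(F^0)(s) − 𝓕(F^1)(s)| ≤ (2 · 4lM · (2π)^{2l−1} / (2l−1)!) · (|s| h)^{2l−1}. -/

import Mathlib

/-- The Fourier transform of the spike-train signal `F(x) = ∑ j, a j · δ(x − x j)`: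
the exponential sum `𝓕(F)(s) = ∑ j, a j · e^{-2πi (x j) s}`. -/
noncomputable def spikeFourier (d : ℕ) (a x : Fin d → ℝ) (s : ℝ) : ℂ :=
  ∑ j, (a j : ℂ) * Complex.exp (-2 * Real.pi * Complex.I * x j * s)

/-- The `k`-th moment `m_k(F) = ∑ j, a j · (x j)^k`. -/
def spikeMoment (d : ℕ) (a x : Fin d → ℝ) (k : ℕ) : ℝ :=
  ∑ j, a j * x j ^ k

/-- if two spike trains with `l` nodes each, all nodes in
`[−h, h]` and all amplitudes bounded by `2M` in absolute value, have equal
moments `m_k` for `k = 0, …, 2l−2`, then for `|s| ≤ 1/(2πh)` the difference of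
their Fourier transforms is bounded by
`(2 · 4lM · (2π)^{2l−1} / (2l−1)!) · (|s|h)^{2l−1}`. -/
theorem fourier_diff_of_equal_moments (l : ℕ) (hl : 1 ≤ l) (M h : ℝ)
    (hM : 0 < M) (hh : 0 < h)
    (a0 x0 a1 x1 : Fin l → ℝ)
    (hx0 : ∀ j, x0 j ∈ Set.Icc (-h) h)
    (hx1 : ∀ j, x1 j ∈ Set.Icc (-h) h)
    (ha0 : ∀ j, |a0 j| ≤ 2 * M)
    (ha1 : ∀ j, |a1 j| ≤ 2 * M)
    (hmom : ∀ k : ℕ, k ≤ 2 * l - 2 → spikeMoment l a0 x0 k = spikeMoment l a1 x1 k)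
    (s : ℝ) (hs : |s| ≤ 1 / (2 * Real.pi * h)) :
    ‖spikeFourier l a0 x0 s - spikeFourier l a1 x1 s‖ ≤
      2 * (4 * l * M) * (2 * Real.pi) ^ (2 * l - 1) / (Nat.factorial (2 * l - 1)) *
        (|s| * h) ^ (2 * l - 1) := by
  set n := 2 * l - 1 with hn
  have hn1 : 1 ≤ n := by omega
  have hpi := Real.pi_pos
  set w : ℂ := -2 * Real.pi * Complex.I * s with hw
  -- norm of w
  have hwabs : ‖w‖ = 2 * Real.pi * |s| := by
    simp [hw, Complex.norm_real, abs_of_pos hpi]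
  -- bound on |w * x| for x ∈ [-h,h]
  have hxb : ∀ (x : ℝ), x ∈ Set.Icc (-h) h → ‖w * x‖ ≤ 2 * Real.pi * |s| * h := by
    intro x hx
    rw [norm_mul, hwabs, Complex.norm_real, Real.norm_eq_abs]
    have : |x| ≤ h := abs_le.2 ⟨hx.1, hx.2⟩
    have h1 : 0 ≤ 2 * Real.pi * |s| := by positivity
    calc 2 * Real.pi * |s| * |x| ≤ 2 * Real.pi * |s| * h := by gcongr
      _ = 2 * Real.pi * |s| * h := rfl
  have hle1 : 2 * Real.pi * |s| * h ≤ 1 := by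
    rw [div_eq_inv_mul, mul_one] at hs
    have h2 : 0 < 2 * Real.pi * h := by positivity
    calc 2 * Real.pi * |s| * h = (2 * Real.pi * h) * |s| := by ring
      _ ≤ (2 * Real.pi * h) * (2 * Real.pi * h)⁻¹ := by gcongr
      _ = 1 := mul_inv_cancel₀ (ne_of_gt h2)
  -- single spike estimate
  have key : ∀ (x : ℝ), x ∈ Set.Icc (-h) h →
      ‖Complex.exp (w * x) - ∑ i ∈ Finset.range n, (w * x) ^ i / i.factorial‖ ≤
        (2 * Real.pi * |s| * h) ^ n / n.factorial * 2 := by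
    intro x hx
    have hb := hxb x hx
    have hb1 : ‖w * x‖ ≤ 1 := hb.trans hle1
    have := Complex.exp_bound' (x := w * x) (n := n)
      (by
        rw [div_le_div_iff₀ (by positivity) (by norm_num)]
        have h2 : (2 : ℝ) ≤ n.succ := by exact_mod_cast Nat.succ_le_succ hn1
        nlinarith [hb1, norm_nonneg (w * x)])
    refine this.trans ?_
    gcongr
  -- partial sums agree
  have hpart : (∑ j, (a0 j : ℂ) * ∑ i ∈ Finset.range n, (w * x0 j) ^ i / i.factorial)
      = ∑ j, (a1 j : ℂ) * ∑ i ∈ Finset.range n, (w * x1 j) ^ i / i.factorial := by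
    have swap : ∀ (a x : Fin l → ℝ),
        (∑ j, (a j : ℂ) * ∑ i ∈ Finset.range n, (w * x j) ^ i / i.factorial)
        = ∑ i ∈ Finset.range n, w ^ i / i.factorial * (spikeMoment l a x i : ℝ) := by
      intro a x
      have e : ∀ j : Fin l, (a j : ℂ) * ∑ i ∈ Finset.range n, (w * x j) ^ i / i.factorial
          = ∑ i ∈ Finset.range n, w ^ i / i.factorial * ((a j : ℂ) * (x j : ℂ) ^ i) := by
        intro j
        rw [Finset.mul_sum]
        refine Finset.sum_congr rfl fun i _ => ?_
        rw [mul_pow]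
        ring
      simp only [e]
      rw [Finset.sum_comm]
      refine Finset.sum_congr rfl fun i _ => ?_
      simp only [spikeMoment]
      push_cast
      rw [Finset.mul_sum]
    rw [swap, swap]
    refine Finset.sum_congr rfl fun i hi => ?_
    rw [hmom i (by simp only [Finset.mem_range] at hi; omega)]
  -- rewrite the difference
  have hdiff : spikeFourier l a0 x0 s - spikeFourier l a1 x1 s
      = (∑ j, (a0 j : ℂ) * (Complex.exp (w * x0 j) - ∑ i ∈ Finset.range n, (w * x0 j) ^ i / i.factorial))
        - (∑ j, (a1 j : ℂ) * (Complex.exp (w * x1 j) - ∑ i ∈ Finset.range n, (w * x1 j) ^ i / i.factorial)) := by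
    simp only [spikeFourier, mul_sub, Finset.sum_sub_distrib]
    have e0 : ∀ j : Fin l, (-2 : ℂ) * Real.pi * Complex.I * (x0 j) * s = w * x0 j := by
      intro j; rw [hw]; ring
    have e1 : ∀ j : Fin l, (-2 : ℂ) * Real.pi * Complex.I * (x1 j) * s = w * x1 j := by
      intro j; rw [hw]; ring
    simp only [e0, e1]
    rw [hpart]
    ring
  rw [hdiff]
  have bound : ∀ (a x : Fin l → ℝ), (∀ j, |a j| ≤ 2 * M) → (∀ j, x j ∈ Set.Icc (-h) h) →
      ‖∑ j, (a j : ℂ) * (Complex.exp (w * x j) - ∑ i ∈ Finset.range n, (w * x j) ^ i / i.factorial)‖ ≤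
        l * (2 * M * ((2 * Real.pi * |s| * h) ^ n / n.factorial * 2)) := by
    intro a x ha hx
    calc ‖∑ j, (a j : ℂ) * (Complex.exp (w * x j) - ∑ i ∈ Finset.range n, (w * x j) ^ i / i.factorial)‖
        ≤ ∑ j, ‖(a j : ℂ) * (Complex.exp (w * x j) - ∑ i ∈ Finset.range n, (w * x j) ^ i / i.factorial)‖ := by
          exact norm_sum_le _ _
      _ ≤ ∑ _j : Fin l, 2 * M * ((2 * Real.pi * |s| * h) ^ n / n.factorial * 2) := by
          refine Finset.sum_le_sum fun j _ => ?_
          rw [norm_mul, Complex.norm_real, Real.norm_eq_abs]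
          exact mul_le_mul (ha j) (key (x j) (hx j)) (norm_nonneg _)
            (by positivity)
      _ = l * (2 * M * ((2 * Real.pi * |s| * h) ^ n / n.factorial * 2)) := by
          simp [Finset.sum_const, nsmul_eq_mul]
  calc ‖_‖ ≤ ‖∑ j, (a0 j : ℂ) * (Complex.exp (w * x0 j) - ∑ i ∈ Finset.range n, (w * x0 j) ^ i / i.factorial)‖
        + ‖∑ j, (a1 j : ℂ) * (Complex.exp (w * x1 j) - ∑ i ∈ Finset.range n, (w * x1 j) ^ i / i.factorial)‖ := by
        exact (norm_sub_le _ _)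
    _ ≤ l * (2 * M * ((2 * Real.pi * |s| * h) ^ n / n.factorial * 2))
        + l * (2 * M * ((2 * Real.pi * |s| * h) ^ n / n.factorial * 2)) :=
        add_le_add (bound a0 x0 ha0 hx0) (bound a1 x1 ha1 hx1)
    _ = 2 * (4 * l * M) * (2 * Real.pi) ^ n / (Nat.factorial n) * (|s| * h) ^ n := by
        rw [show (2 * Real.pi * |s| * h) = (2 * Real.pi) * (|s| * h) by ring, mul_pow]
        field_simp
        ring
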